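/- Let n ∈ ℕ, h > 0, and let z ∈ ℂ with 0 < |z| < 1; set λ := z + 1/z. Then λ is an eigenvalue of J_{n,h} if and only if there exists ζ ∈ ℂ with 0 < |ζ| < 1 such that ζ^{2n−1}(ζ² − 1)² − ih(1 − ζ^{2n})(1 − ζ^{2n+2}) = 0 and z = (ζ^{2n+2} − 1)/(ζ^{2n+1} − ζ). -/

import Mathlib

set_option maxHeartbeats 1000000

noncomputable section

open Filter

/-- `l` is an eigenvalue of the semi-infinite discrete Schrödinger matrix `J_{n,h}`
with pure imaginary step potential (diagonal entries `i h` on sites `1,…,n`, `0` afterwards;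
off-diagonal entries `1`): there is a nonzero square-summable sequence `g = (g_k)_{k ≥ 1}`,
extended by `g 0 = 0`, with `g_{k-1} + b_k g_k + g_{k+1} = l g_k` for all `k ≥ 1`. -/
def IsSchrodingerEigenvalue (n : ℕ) (h : ℝ) (l : ℂ) : Prop :=
  ∃ g : ℕ → ℂ, g 0 = 0 ∧ g ≠ 0 ∧ Summable (fun k : ℕ => ‖g k‖ ^ 2) ∧
    ∀ k : ℕ, 1 ≤ k →
      g (k - 1) + (if k ≤ n then (h : ℂ) * Complex.I else 0) * g k + g (k + 1) = l * g k

lemma key_t (ζ z w t : ℂ) (hζ : ζ ≠ 0) (hne1 : t*ζ - 1 ≠ 0) (hne3 : t*ζ^3 - 1 ≠ 0)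
    (hz0 : z ≠ 0) (hzf : z = (t*ζ^3 - 1)/(t*ζ^2 - ζ)) :
    (z + 1/z = ζ + ζ⁻¹ + w) ↔ t*(ζ^2-1)^2 - w*(1-t*ζ)*(1-t*ζ^3) = 0 := by
  have hden : t*ζ^2 - ζ ≠ 0 := by
    intro hc
    apply hne1
    have h2 : ζ * (t*ζ - 1) = 0 := by linear_combination hc
    rcases mul_eq_zero.mp h2 with h | h
    · exact absurd h hζ
    · exact h
  have H : (z + 1/z - (ζ + ζ⁻¹ + w)) * (ζ * (t*ζ - 1) * (t*ζ^3 - 1))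
      = ζ * (t*(ζ^2-1)^2 - w*(1-t*ζ)*(1-t*ζ^3)) := by
    subst hzf
    field_simp
    ring
  constructor
  · intro he
    have h0 : (z + 1/z - (ζ + ζ⁻¹ + w)) = 0 := by rw [he]; ring
    rw [h0, zero_mul] at H
    exact (mul_eq_zero.mp H.symm).resolve_left hζ
  · intro hp
    rw [hp, mul_zero] at H
    rcases mul_eq_zero.mp H with h | h
    · exact sub_eq_zero.mp h
    · rcases mul_eq_zero.mp h with h' | h'
      · rcases mul_eq_zero.mp h' with h'' | h''
        · exact absurd h'' hζ
        · exact absurd h'' hne1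
      · exact absurd h' hne3

lemma key_iff (n : ℕ) (hn : 1 ≤ n) (ζ z w : ℂ) (hζ : ζ ≠ 0)
    (h2n : ζ^(2*n) ≠ 1) (h2n2 : ζ^(2*n+2) ≠ 1) (hz0 : z ≠ 0)
    (hzf : z = (ζ ^ (2 * n + 2) - 1) / (ζ ^ (2 * n + 1) - ζ)) :
    (z + 1/z = ζ + ζ⁻¹ + w) ↔
      ζ ^ (2 * n - 1) * (ζ ^ 2 - 1) ^ 2 - w * (1 - ζ ^ (2 * n)) * (1 - ζ ^ (2 * n + 2)) = 0 := by
  have e1 : ζ ^ (2*n) = ζ ^ (2*n-1) * ζ := by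
    rw [← pow_succ]; congr 1; omega
  have e2 : ζ ^ (2*n+1) = ζ ^ (2*n-1) * ζ^2 := by
    rw [← pow_add]; congr 1; omega
  have e3 : ζ ^ (2*n+2) = ζ ^ (2*n-1) * ζ^3 := by
    rw [← pow_add]; congr 1; omega
  simp only [e1, e2, e3] at h2n h2n2 hzf ⊢
  exact key_t ζ z w (ζ^(2*n-1)) hζ (sub_ne_zero.mpr h2n) (sub_ne_zero.mpr h2n2) hz0 hzf

lemma zform_iff (n : ℕ) (ζ z : ℂ) (hζ : ζ ≠ 0) (h2n : ζ^(2*n) ≠ 1) :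
    z = (ζ ^ (2 * n + 2) - 1) / (ζ ^ (2 * n + 1) - ζ) ↔
      z * (ζ^n - ζ⁻¹^n) = ζ^(n+1) - ζ⁻¹^(n+1) := by
  have hinv : ζ * ζ⁻¹ = 1 := mul_inv_cancel₀ hζ
  have hX : ζ^n * ζ⁻¹^n = 1 := by rw [← mul_pow, hinv, one_pow]
  have hX1 : ζ^(n+1) * ζ⁻¹^(n+1) = 1 := by rw [← mul_pow, hinv, one_pow]
  have hden : ζ^(2*n+1) - ζ ≠ 0 := by
    intro hc
    apply h2n
    have h1 : ζ * (ζ^(2*n) - 1) = 0 := by linear_combination hc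
    rcases mul_eq_zero.mp h1 with h2 | h2
    · exact absurd h2 hζ
    · exact sub_eq_zero.mp h2
  rw [eq_div_iff hden]
  constructor
  · intro e
    apply mul_left_cancel₀ (pow_ne_zero (n+1) hζ)
    linear_combination e - z*ζ*hX + hX1
  · intro e
    linear_combination ζ^(n+1)*e + z*ζ*hX - hX1

/-- a power of something of norm `< 1` is not `1` -/
lemma pow_ne_one_of_abs_lt_one {ζ : ℂ} (h : ‖ζ‖ < 1) {m : ℕ} (hm : m ≠ 0) :
    ζ ^ m ≠ 1 := by
  intro hc
  have : ‖ζ ^ m‖ < 1 := by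
    rw [norm_pow]; exact pow_lt_one₀ (norm_nonneg ζ) h hm
  rw [hc, norm_one] at this
  exact lt_irrefl _ this

/-- Characterization of the eigenvalues of `J_{n,h}` via the algebraic equation
`P_n(ζ) = ζ^{2n-1}(ζ²-1)² - ih(1-ζ^{2n})(1-ζ^{2n+2}) = 0` together with
`z = (ζ^{2n+2}-1)/(ζ^{2n+1}-ζ)` (Proposition 3.2). -/
theorem stmt16 (n : ℕ) (hn : 1 ≤ n) (h : ℝ) (hh : 0 < h) (z : ℂ)
    (hz0 : z ≠ 0) (hz1 : ‖z‖ < 1) :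
    IsSchrodingerEigenvalue n h (z + 1 / z) ↔
      ∃ ζ : ℂ, ζ ≠ 0 ∧ ‖ζ‖ < 1 ∧
        ζ ^ (2 * n - 1) * (ζ ^ 2 - 1) ^ 2 -
          Complex.I * (h : ℂ) * (1 - ζ ^ (2 * n)) * (1 - ζ ^ (2 * n + 2)) = 0 ∧
        z = (ζ ^ (2 * n + 2) - 1) / (ζ ^ (2 * n + 1) - ζ) := by
  have hzz : z * z⁻¹ = 1 := mul_inv_cancel₀ hz0
  have hznorm : ‖z‖ < 1 := by exact hz1
  constructor
  · -- forward direction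
    rintro ⟨g, hg0, hgne, hgsum, hrec⟩
    -- limits
    have hgto : Tendsto g atTop (nhds 0) := by
      rw [tendsto_zero_iff_norm_tendsto_zero]
      have h1 : Tendsto (fun k => ‖g k‖ ^ 2) atTop (nhds 0) := hgsum.tendsto_atTop_zero
      have h2 : Tendsto (fun k => Real.sqrt (‖g k‖ ^ 2)) atTop (nhds (Real.sqrt 0)) :=
        (Real.continuous_sqrt.tendsto 0).comp h1
      simpa [Real.sqrt_sq (norm_nonneg _)] using h2
    -- recurrence rewrites
    have hrec' : ∀ j : ℕ, g (j+2) = (z + 1/z) * g (j+1) - g j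
        - (if j+1 ≤ n then (h:ℂ)*Complex.I else 0) * g (j+1) := by
      intro j
      have e := hrec (j+1) (by omega)
      simp only [Nat.add_sub_cancel] at e
      linear_combination e
    have hrec'' : ∀ j : ℕ, g j = (z + 1/z) * g (j+1) - g (j+2)
        - (if j+1 ≤ n then (h:ℂ)*Complex.I else 0) * g (j+1) := by
      intro j
      have e := hrec (j+1) (by omega)
      simp only [Nat.add_sub_cancel] at e
      linear_combination e
    -- tail analysis
    have hzsub : z - z⁻¹ ≠ 0 := by
      intro hc
      have h2 : z^2 - 1 = 0 := by linear_combination z*hc + hzz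
      exact pow_ne_one_of_abs_lt_one hz1 two_ne_zero (by linear_combination h2)
    set α : ℂ := (g (n+1) - g n * z⁻¹) / (z - z⁻¹) with hα_def
    set β : ℂ := (g n * z - g (n+1)) / (z - z⁻¹) with hβ_def
    have hT : ∀ k : ℕ, g (n + k) = α * z^k + β * z⁻¹^k := by
      intro k
      induction k using Nat.strong_induction_on with
      | _ k ih =>
        match k, ih with
        | 0, _ =>
          simp only [pow_zero, mul_one, Nat.add_zero]
          rw [hα_def, hβ_def, ← add_div, eq_div_iff hzsub]
          ring
        | 1, _ =>
          simp only [pow_one]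
          rw [hα_def, hβ_def, div_mul_eq_mul_div, div_mul_eq_mul_div, ← add_div,
            eq_div_iff hzsub]
          ring
        | (k+2), ih =>
          have ih1 := ih (k+1) (by omega)
          have ih0 := ih k (by omega)
          have e := hrec' (n + k)
          rw [if_neg (by omega)] at e
          have hidx1 : n + (k+1) = n + k + 1 := by omega
          have hidx2 : n + (k+2) = n + k + 2 := by omega
          rw [hidx1] at ih1
          rw [hidx2]
          linear_combination e + (z + 1/z) * ih1 - ih0 + (α*z^k + β*z⁻¹^k) * hzz
    have honek : ∀ k : ℕ, z⁻¹^k * z^k = 1 := by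
      intro k; rw [← mul_pow, inv_mul_cancel₀ hz0, one_pow]
    have hβ0 : β = 0 := by
      have hc1 : Tendsto (fun k : ℕ => g (n + k)) atTop (nhds 0) := by
        apply hgto.comp
        simpa [Nat.add_comm] using tendsto_add_atTop_nat n
      have hc2 : Tendsto (fun k : ℕ => z ^ k) atTop (nhds 0) :=
        tendsto_pow_atTop_nhds_zero_of_norm_lt_one hznorm
      have hc3 : Tendsto (fun k : ℕ => (z^2) ^ k) atTop (nhds 0) :=
        tendsto_pow_atTop_nhds_zero_of_norm_lt_one (by
          rw [norm_pow]; nlinarith [norm_nonneg z])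
      have hc : Tendsto (fun k : ℕ => g (n + k) * z^k - α * (z^2)^k) atTop (nhds 0) := by
        have := (hc1.mul hc2).sub (hc3.const_mul α)
        simpa using this
      have heqc : ∀ k : ℕ, g (n + k) * z^k - α * (z^2)^k = β := by
        intro k
        linear_combination z^k * (hT k) + β * (honek k)
      have : Tendsto (fun _ : ℕ => β) atTop (nhds 0) := by
        convert hc using 1; funext k; rw [heqc k]
      exact tendsto_nhds_unique tendsto_const_nhds this
    have hTz : ∀ k : ℕ, g (n + k) = α * z^k := by
      intro k; rw [hT k, hβ0, zero_mul, add_zero]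
    have hgn : g n = α := by simpa using hTz 0
    have hgn1 : g (n+1) = α * z := by simpa using hTz 1
    -- g n ≠ 0
    have hgnne : g n ≠ 0 := by
      intro h0
      have hα0 : α = 0 := by rw [← hgn]; exact h0
      have hzero : ∀ k, g (n + k) = 0 := by
        intro k; rw [hTz k, hα0, zero_mul]
      have hdown : ∀ i, ∀ k, g (n - i + k) = 0 := by
        intro i
        induction i with
        | zero => simpa using hzero
        | succ i ih =>
          intro k
          by_cases hbig : n - i ≤ n - (i+1) + k
          · obtain ⟨k', hk'⟩ : ∃ k', n - (i+1) + k = n - i + k' := ⟨n - (i+1) + k - (n-i), by omega⟩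
            rw [hk']; exact ih k'
          · have hk0 : k = 0 := by omega
            subst hk0
            have e1 : g (n - (i+1) + 1) = 0 := by
              have hx : n - (i+1) + 1 = n - i + 0 := by omega
              rw [hx]; exact ih 0
            have e2 : g (n - (i+1) + 2) = 0 := by
              have hx : n - (i+1) + 2 = n - i + 1 := by omega
              rw [hx]; exact ih 1
            rw [Nat.add_zero, hrec'' (n - (i+1)), e1, e2]
            ring
      apply hgne
      funext j
      have := hdown n j
      rwa [Nat.sub_self, Nat.zero_add] at this
    have hzgn : g (n+1) = z * g n := by rw [hgn1, hgn]; ring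
    -- construct ζ
    set μ : ℂ := z + 1/z - (h:ℂ)*Complex.I with hμ_def
    obtain ⟨w, hw⟩ : ∃ w : ℂ, w^2 = μ^2 - 4 :=
      IsAlgClosed.exists_pow_nat_eq (μ^2-4) (by norm_num)
    have hr12 : ((μ+w)/2) * ((μ-w)/2) = 1 := by linear_combination (-(1:ℂ)/4) * hw
    have hr12s : ((μ+w)/2) + ((μ-w)/2) = μ := by ring
    obtain ⟨ζ, o, hprod, hsum, habs⟩ :
        ∃ ζ o : ℂ, ζ * o = 1 ∧ ζ + o = μ ∧ ‖ζ‖ ≤ 1 := by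
      rcases le_total ‖(μ+w)/2‖ ‖(μ-w)/2‖ with hle | hle
      · refine ⟨(μ+w)/2, (μ-w)/2, hr12, hr12s, ?_⟩
        have hm : ‖(μ+w)/2‖ * ‖(μ-w)/2‖ = 1 := by
          rw [← norm_mul, hr12, norm_one]
        nlinarith [norm_nonneg ((μ+w)/2)]
      · refine ⟨(μ-w)/2, (μ+w)/2, by rw [mul_comm]; exact hr12, by rw [add_comm]; exact hr12s, ?_⟩
        have hm : ‖(μ-w)/2‖ * ‖(μ+w)/2‖ = 1 := by
          rw [← norm_mul, mul_comm ((μ-w)/2), hr12, norm_one]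
        nlinarith [norm_nonneg ((μ-w)/2)]
    have hζ0 : ζ ≠ 0 := by
      intro hc; rw [hc, zero_mul] at hprod; exact zero_ne_one hprod
    have hoζ : o = ζ⁻¹ := eq_inv_of_mul_eq_one_left (by rw [mul_comm]; exact hprod)
    have hμζ : ζ + ζ⁻¹ = μ := by rw [← hoζ]; exact hsum
    have hinv : ζ * ζ⁻¹ = 1 := mul_inv_cancel₀ hζ0
    have hlam : z + 1/z = ζ + ζ⁻¹ + (h:ℂ)*Complex.I := by
      rw [hμζ, hμ_def]; ring
    have hrecin : ∀ j : ℕ, j + 1 ≤ n → g (j+2) = μ * g (j+1) - g j := by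
      intro j hj
      have e := hrec' j
      rw [if_pos hj] at e
      rw [e, hμ_def]; ring
    by_cases hsq : ζ^2 = 1
    · -- degenerate case: contradiction with |z| < 1
      exfalso
      have hζi : ζ⁻¹ = ζ :=
        inv_eq_of_mul_eq_one_right (by linear_combination hsq)
      have hμ2 : μ = 2*ζ := by rw [← hμζ, hζi]; ring
      have claim : ∀ k : ℕ, k ≤ n + 1 → ζ * g k = g 1 * (k : ℂ) * ζ^k := by
        intro k
        induction k using Nat.strong_induction_on with
        | _ k ih =>
          match k, ih with
          | 0, _ => intro _; rw [hg0]; simp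
          | 1, _ => intro _; push_cast; ring
          | (k+2), ih =>
            intro hk
            have ih1 := ih (k+1) (by omega) (by omega)
            have ih0 := ih k (by omega) (by omega)
            have e := hrecin k (by omega)
            rw [hμ2] at e
            push_cast
            push_cast at ih1 ih0
            linear_combination ζ * e + 2*ζ*ih1 - ih0 + (g 1 * (k:ℂ) * ζ^k) * hsq
      have hcn := claim n (by omega)
      have hcn1 := claim (n+1) (by omega)
      have hg1 : g 1 ≠ 0 := by
        intro hc
        rw [hc] at hcn
        simp only [zero_mul] at hcn
        exact hζ0 (by
          rcases mul_eq_zero.mp hcn with h' | h'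
          · exact h'
          · exact absurd h' hgnne)
      have habs1 : ‖ζ‖ = 1 := by
        have h2 : ‖ζ‖ ^ 2 = 1 := by
          have := congrArg norm hsq
          rw [norm_pow, norm_one] at this
          exact this
        nlinarith [norm_nonneg ζ]
      have hkey : ((n:ℂ)+1) * ζ = z * (n:ℂ) := by
        have hm : g 1 * (((n:ℂ))+1) * ζ^(n+1) = z * (g 1 * (n:ℂ) * ζ^n) := by
          push_cast at hcn1
          calc g 1 * (((n:ℂ))+1) * ζ^(n+1) = ζ * g (n+1) := hcn1.symm
          _ = ζ * (z * g n) := by rw [hzgn]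
          _ = z * (ζ * g n) := by ring
          _ = z * (g 1 * (n:ℂ) * ζ^n) := by rw [hcn]
        have hne : g 1 * ζ^n ≠ 0 := mul_ne_zero hg1 (pow_ne_zero _ hζ0)
        apply mul_right_cancel₀ hne
        linear_combination hm
      have habk := congrArg norm hkey
      rw [norm_mul, norm_mul, habs1, mul_one] at habk
      have hnn : ‖(n:ℂ)+1‖ = (n:ℝ)+1 := by
        have : ((n:ℂ)+1) = ((n+1:ℕ) : ℂ) := by push_cast; ring
        rw [this, Complex.norm_natCast]; push_cast; ring
      have hnn2 : ‖(n:ℂ)‖ = (n:ℝ) := Complex.norm_natCast n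
      rw [hnn, hnn2] at habk
      have hnpos : (1:ℝ) ≤ (n:ℝ) := by exact_mod_cast hn
      nlinarith [norm_nonneg z]
    · -- main case
      have hζsub : ζ - ζ⁻¹ ≠ 0 := by
        intro hc
        apply hsq
        have : ζ^2 - 1 = ζ * (ζ - ζ⁻¹) + (ζ*ζ⁻¹ - 1) := by ring
        rw [hc, hinv] at this
        simp at this
        linear_combination this
      have claim : ∀ k : ℕ, k ≤ n + 1 → (ζ - ζ⁻¹) * g k = g 1 * (ζ^k - ζ⁻¹^k) := by
        intro k
        induction k using Nat.strong_induction_on with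
        | _ k ih =>
          match k, ih with
          | 0, _ => intro _; rw [hg0]; simp
          | 1, _ => intro _; ring
          | (k+2), ih =>
            intro hk
            have ih1 := ih (k+1) (by omega) (by omega)
            have ih0 := ih k (by omega) (by omega)
            have e := hrecin k (by omega)
            rw [← hμζ] at e
            linear_combination (ζ - ζ⁻¹) * e + (ζ + ζ⁻¹) * ih1 - ih0 + (g 1 * (ζ^k - ζ⁻¹^k)) * hinv
      have hcn := claim n (by omega)
      have hcn1 := claim (n+1) (by omega)
      have hlhs : (ζ - ζ⁻¹) * g n ≠ 0 := mul_ne_zero hζsub hgnne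
      have hg1 : g 1 ≠ 0 := by
        intro hc; rw [hcn, hc, zero_mul] at hlhs; exact hlhs rfl
      have hpn : ζ^n - ζ⁻¹^n ≠ 0 := by
        intro hc; rw [hcn, hc, mul_zero] at hlhs; exact hlhs rfl
      have hX : ζ^n * ζ⁻¹^n = 1 := by rw [← mul_pow, hinv, one_pow]
      have h2n : ζ^(2*n) ≠ 1 := by
        intro hc
        apply hpn
        have h2 : ζ^n * ζ^n = 1 := by rw [← pow_add]; rw [show n + n = 2*n by ring]; exact hc
        have h3 : ζ^n * (ζ^n - ζ⁻¹^n) = 0 := by linear_combination h2 - hX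
        exact (mul_eq_zero.mp h3).resolve_left (pow_ne_zero _ hζ0)
      have hzm : z * (ζ^n - ζ⁻¹^n) = ζ^(n+1) - ζ⁻¹^(n+1) := by
        apply mul_left_cancel₀ hg1
        linear_combination -z * hcn + hcn1 - (ζ - ζ⁻¹) * hzgn
      -- |ζ| < 1
      have hζlt : ‖ζ‖ < 1 := by
        rcases lt_or_eq_of_le habs with hlt | heq
        · exact hlt
        exfalso
        have hconj : ζ⁻¹ = (starRingEnd ℂ) ζ := by
          rw [Complex.inv_def, Complex.normSq_eq_norm_sq, heq]
          simp
        have hconjn : ∀ m : ℕ, ζ⁻¹^m = (starRingEnd ℂ) (ζ^m) := by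
          intro m; rw [hconj, ← map_pow]
        have hsubim : ∀ v : ℂ, v - (starRingEnd ℂ) v = (2 * v.im : ℝ) * Complex.I :=
          fun v => Complex.sub_conj v
        have hzm' : z * ((2 * (ζ^n).im : ℝ) * Complex.I)
            = (2 * (ζ^(n+1)).im : ℝ) * Complex.I := by
          rw [← hsubim, ← hsubim, ← hconjn, ← hconjn]; exact hzm
        have haim : ((ζ^n).im : ℝ) ≠ 0 := by
          intro hc
          apply hpn
          rw [hconjn]
          have := hsubim (ζ^n)
          rw [hc] at this
          simpa using this
        have hz_real : z.im = 0 := by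
          have h2I : (2 : ℂ) * Complex.I ≠ 0 := by simp [Complex.I_ne_zero]
          have hzab : z * ((ζ^n).im : ℂ) = ((ζ^(n+1)).im : ℂ) := by
            apply mul_left_cancel₀ h2I
            push_cast at hzm' ⊢
            linear_combination hzm'
          have := congrArg Complex.im hzab
          simp [Complex.mul_im, Complex.ofReal_im, Complex.ofReal_re] at this
          rcases this with h' | h'
          · exact h'
          · exact absurd (by exact_mod_cast h') haim
        have him := congrArg Complex.im hlam
        rw [hconj] at him
        have h1z : (1/z).im = 0 := by
          rw [one_div, Complex.inv_im, hz_real]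
          simp
        rw [Complex.add_im, Complex.add_im, hz_real, h1z] at him
        simp [Complex.conj_im, Complex.mul_im] at him
        exact hh.ne' him.symm
      have h2n2 : ζ^(2*n+2) ≠ 1 := pow_ne_one_of_abs_lt_one hζlt (by omega)
      have hzf : z = (ζ ^ (2 * n + 2) - 1) / (ζ ^ (2 * n + 1) - ζ) :=
        (zform_iff n ζ z hζ0 h2n).mpr hzm
      refine ⟨ζ, hζ0, hζlt, ?_, hzf⟩
      have hP := (key_iff n hn ζ z (Complex.I * (h:ℂ)) hζ0 h2n h2n2 hz0 hzf).mp
        (by rw [hlam]; ring)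
      linear_combination hP
  · -- reverse direction
    rintro ⟨ζ, hζ0, hζ1, hP, hzf⟩
    have hinv : ζ * ζ⁻¹ = 1 := mul_inv_cancel₀ hζ0
    have h2n : ζ^(2*n) ≠ 1 := pow_ne_one_of_abs_lt_one hζ1 (by omega)
    have h2n2 : ζ^(2*n+2) ≠ 1 := pow_ne_one_of_abs_lt_one hζ1 (by omega)
    have hζ2 : ζ^2 ≠ 1 := pow_ne_one_of_abs_lt_one hζ1 two_ne_zero
    have hlam : z + 1/z = ζ + ζ⁻¹ + (h:ℂ)*Complex.I := by
      have := (key_iff n hn ζ z (Complex.I * (h:ℂ)) hζ0 h2n h2n2 hz0 hzf).mpr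
        (by linear_combination hP)
      rw [this]; ring
    have hzm : z * (ζ^n - ζ⁻¹^n) = ζ^(n+1) - ζ⁻¹^(n+1) :=
      (zform_iff n ζ z hζ0 h2n).mp hzf
    set C : ℂ := (ζ^(n+1) - ζ⁻¹^(n+1)) / z^(n+1) with hC_def
    have hC1 : C * z^(n+1) = ζ^(n+1) - ζ⁻¹^(n+1) :=
      div_mul_cancel₀ _ (pow_ne_zero _ hz0)
    have hC0 : C * z^n = ζ^n - ζ⁻¹^n := by
      apply mul_right_cancel₀ hz0
      calc C * z^n * z = C * z^(n+1) := by ring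
      _ = ζ^(n+1) - ζ⁻¹^(n+1) := hC1
      _ = z * (ζ^n - ζ⁻¹^n) := hzm.symm
      _ = (ζ^n - ζ⁻¹^n) * z := by ring
    set g : ℕ → ℂ := fun k => if k ≤ n then ζ^k - ζ⁻¹^k else C * z^k with hg_def
    have hgle : ∀ k, k ≤ n → g k = ζ^k - ζ⁻¹^k := by
      intro k hk
      show (if k ≤ n then ζ^k - ζ⁻¹^k else C * z^k) = ζ^k - ζ⁻¹^k
      rw [if_pos hk]
    have hggt : ∀ k, n < k → g k = C * z^k := by
      intro k hk
      show (if k ≤ n then ζ^k - ζ⁻¹^k else C * z^k) = C * z^k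
      rw [if_neg (by omega : ¬ k ≤ n)]
    have hgn1 : g (n+1) = ζ^(n+1) - ζ⁻¹^(n+1) := by
      rw [hggt (n+1) (by omega), hC1]
    refine ⟨g, ?_, ?_, ?_, ?_⟩
    · rw [hgle 0 (by omega)]; simp
    · intro hc
      have h1 : g 1 = 0 := by rw [hc]; rfl
      rw [hgle 1 hn] at h1
      apply hζ2
      have : ζ * (ζ^1 - ζ⁻¹^1) = ζ^2 - ζ*ζ⁻¹ := by ring
      rw [h1, hinv] at this
      simp at this
      linear_combination -this
    · rw [← summable_nat_add_iff (n+1)]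
      have heq : ∀ k : ℕ, ‖g (k + (n+1))‖^2 = ‖C * z^(n+1)‖^2 * (‖z‖^2)^k := by
        intro k
        rw [hggt (k + (n+1)) (by omega)]
        have : C * z^(k + (n+1)) = (C * z^(n+1)) * z^k := by rw [pow_add]; ring
        rw [this, norm_mul, norm_pow, mul_pow, ← pow_mul, ← pow_mul, mul_comm 2 k, pow_mul]
      have hs : Summable (fun k : ℕ => ‖C * z^(n+1)‖^2 * (‖z‖^2)^k) :=
        (summable_geometric_of_lt_one (by positivity)
          (by nlinarith [norm_nonneg z])).mul_left _
      exact hs.congr (fun k => (heq k).symm)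
    · intro k hk
      obtain ⟨j, rfl⟩ : ∃ j, k = j + 1 := ⟨k - 1, by omega⟩
      simp only [Nat.add_sub_cancel]
      by_cases hjn : j + 1 ≤ n
      · rw [if_pos hjn]
        have gj : g j = ζ^j - ζ⁻¹^j := hgle j (by omega)
        have gj1 : g (j+1) = ζ^(j+1) - ζ⁻¹^(j+1) := hgle (j+1) hjn
        have gj2 : g (j+1+1) = ζ^(j+2) - ζ⁻¹^(j+2) := by
          by_cases h2 : j + 2 ≤ n
          · rw [show j+1+1 = j+2 by ring]; exact hgle (j+2) h2
          · rw [show j+1+1 = n+1 by omega, hgn1]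
        rw [gj, gj1, gj2]
        linear_combination -(ζ^(j+1) - ζ⁻¹^(j+1)) * hlam - (ζ^j - ζ⁻¹^j) * hinv
      · rw [if_neg hjn]
        have gj1 : g (j+1) = C * z^(j+1) := hggt (j+1) (by omega)
        have gj2 : g (j+1+1) = C * z^(j+2) := by
          rw [show j+1+1 = j+2 by ring]; exact hggt (j+2) (by omega)
        have gj : g j = C * z^j := by
          rcases Nat.lt_or_ge n j with hlt | hge
          · exact hggt j hlt
          · have hj_eq : j = n := by omega
            rw [hj_eq, hgle n (le_refl n), ← hC0]
        rw [gj, gj1, gj2, zero_mul, add_zero]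
        have h1z : (1:ℂ)/z = z⁻¹ := one_div z
        rw [h1z]
        linear_combination (-(C*z^j)) * hzz

end
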